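/- Let k be a field, F = k((ε)), O = k[[ε]]. Let γ_1, γ_2 ∈ ε·O with γ_1 ≠ γ_2, and let L ⊆ F² be an O-lattice stable under γ : (x,y) ↦ (γ_1 x, γ_2 y). Let J = { x ∈ F : ∃ y, (x,y) ∈ L } and I = { x ∈ F : (x,0) ∈ L }. Then L is a free O-module of rank 2, the induced k-linear endomorphism γ̄ of the 2-dimensional k-vector space L/εL is nilpotent, and γ̄ ≠ 0 (equivalently, γ̄ is a regular element of End_k(L/εL), i.e. its minimal polynomial has degree 2) if and only if (γ_1 − γ_2)·J = I. -/

import Mathlib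

open scoped Pointwise

set_option maxHeartbeats 2000000 in
/-- **GKM regularity criterion, rank-one case.**  Let `F = k((ε))` (an abstract fraction field
of `O = k[[ε]]`), let `γ₁ ≠ γ₂` be elements of `ε·O`, and let `L ⊆ F²` be an `O`-lattice
(finitely generated, spanning `F²` over `F`) stable under `γ : (x,y) ↦ (γ₁x, γ₂y)`; let
`g : L → L` denote the endomorphism induced by `γ` and `ḡ` the induced endomorphism of
`L/εL`.  Then `L` is free of rank `2` over `O`, `L/εL` is a `2`-dimensional `k`-vector space,
`ḡ` is nilpotent, and `ḡ ≠ 0` if and only if `(γ₁ - γ₂)·J = I`, where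
`J = {x | ∃ y, (x,y) ∈ L}` and `I = {x | (x,0) ∈ L}`. -/
theorem gkm_rank_one_regularity (k : Type*) [Field k]
    (F : Type*) [Field F] [Algebra k F] [Algebra (PowerSeries k) F]
    [IsScalarTower k (PowerSeries k) F] [IsFractionRing (PowerSeries k) F]
    (γ₁ γ₂ : PowerSeries k)
    (h₁ : PowerSeries.X ∣ γ₁) (h₂ : PowerSeries.X ∣ γ₂) (hne : γ₁ ≠ γ₂)
    (L : Submodule (PowerSeries k) (F × F)) (hfg : L.FG)
    (hfull : Submodule.span F (L : Set (F × F)) = ⊤)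
    (hstab : ∀ p ∈ L,
      (algebraMap (PowerSeries k) F γ₁ * p.1, algebraMap (PowerSeries k) F γ₂ * p.2) ∈ L)
    (g : L →ₗ[PowerSeries k] L)
    (hg : ∀ p : L, (g p : F × F) =
      (algebraMap (PowerSeries k) F γ₁ * (p : F × F).1,
       algebraMap (PowerSeries k) F γ₂ * (p : F × F).2))
    (gbar : (L ⧸ ((PowerSeries.X : PowerSeries k) • (⊤ : Submodule (PowerSeries k) L)))
      →ₗ[PowerSeries k]
        (L ⧸ ((PowerSeries.X : PowerSeries k) • (⊤ : Submodule (PowerSeries k) L))))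
    (hgbar : ∀ p : L, gbar (Submodule.Quotient.mk p) = Submodule.Quotient.mk (g p)) :
    Module.Free (PowerSeries k) L ∧ Module.finrank (PowerSeries k) L = 2 ∧
    Module.finrank k
      (L ⧸ ((PowerSeries.X : PowerSeries k) • (⊤ : Submodule (PowerSeries k) L))) = 2 ∧
    IsNilpotent gbar ∧
    (gbar ≠ 0 ↔
      (algebraMap (PowerSeries k) F (γ₁ - γ₂)) • {x : F | ∃ y : F, (x, y) ∈ L}
        = {x : F | (x, (0 : F)) ∈ L}) := by
  haveI : Module.IsTorsionFree (PowerSeries k) F :=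
    Module.isTorsionFree_iff_algebraMap_injective.mpr (IsFractionRing.injective _ _)
  haveI : Module.Finite (PowerSeries k) ↥L := Module.Finite.iff_fg.mpr hfg
  haveI hfree : Module.Free (PowerSeries k) ↥L := inferInstance
  set b := Module.Free.chooseBasis (PowerSeries k) ↥L with hb
  set ι := Module.Free.ChooseBasisIndex (PowerSeries k) ↥L
  have hcard : Fintype.card ι = 2 := by
    set v : ι → F × F := fun i => ((b i : ↥L) : F × F) with hv
    have hli : LinearIndependent (PowerSeries k) v := by
      have := b.linearIndependent
      exact this.map' L.subtype (Submodule.ker_subtype L)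
    have hliF : LinearIndependent F v :=
      hli.localization F (nonZeroDivisors (PowerSeries k))
    have hrange : Set.range v = L.subtype '' Set.range ⇑b := by
      rw [← Set.range_comp]; rfl
    have hspanO : Submodule.span (PowerSeries k) (Set.range v) = L := by
      rw [hrange, Submodule.span_image, b.span_eq, Submodule.map_top,
        Submodule.range_subtype]
    have hspanF : Submodule.span F (Set.range v) = ⊤ := by
      rw [← Submodule.span_span_of_tower (PowerSeries k) F (Set.range v), hspanO, hfull]
    let bF : Module.Basis ι F (F × F) := Module.Basis.mk hliF (by rw [hspanF])
    have h2 := Module.finrank_eq_card_basis bF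
    simp [Module.finrank_prod] at h2
    omega
  have hrank : Module.finrank (PowerSeries k) ↥L = 2 := by
    rw [Module.finrank_eq_card_chooseBasisIndex]; exact hcard
  have memNq : ∀ p : ↥L, p ∈ ((PowerSeries.X : PowerSeries k) • (⊤ : Submodule (PowerSeries k) ↥L)) ↔ ∃ q : ↥L, (PowerSeries.X : PowerSeries k) • q = p := by
    intro p
    constructor
    · rintro ⟨q, -, rfl⟩; exact ⟨q, rfl⟩
    · rintro ⟨q, rfl⟩; exact ⟨q, trivial, rfl⟩
  have hsmul : ∀ (a : k) (x : ↥L), a • x = (algebraMap k (PowerSeries k) a) • x := by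
    intro a x; rw [algebraMap_smul]
  let σ : (ι → k) →ₗ[k] (↥L ⧸ ((PowerSeries.X : PowerSeries k) • (⊤ : Submodule (PowerSeries k) ↥L))) :=
    { toFun := fun c => Submodule.Quotient.mk (∑ i, c i • b i)
      map_add' := fun c d => by
        simp only [Pi.add_apply, add_smul, Finset.sum_add_distrib,
          Submodule.Quotient.mk_add]
      map_smul' := fun a c => by
        simp only [Pi.smul_apply, smul_eq_mul, mul_smul, ← Finset.smul_sum,
          ← Submodule.Quotient.mk_smul, RingHom.id_apply] }
  have hσsurj : Function.Surjective σ := by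
    intro q
    obtain ⟨p, rfl⟩ := Submodule.Quotient.mk_surjective _ q
    set r : ι →₀ PowerSeries k := b.repr p with hr
    refine ⟨fun i => PowerSeries.constantCoeff (r i), ?_⟩
    have hp : p = ∑ i, r i • b i := (b.sum_repr p).symm
    show Submodule.Quotient.mk _ = _
    rw [Submodule.Quotient.eq]
    have key : (∑ i, PowerSeries.constantCoeff (r i) • b i) - p
        = ∑ i, ((PowerSeries.C (PowerSeries.constantCoeff (r i)) - r i) • b i) := by
      rw [hp, ← Finset.sum_sub_distrib]
      exact Finset.sum_congr rfl fun i _ => by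
        rw [hsmul, ← PowerSeries.C_eq_algebraMap]
        exact (sub_smul _ _ _).symm
    rw [key]
    refine Submodule.sum_mem _ fun i _ => ?_
    have hdvd : (PowerSeries.X : PowerSeries k) ∣
        (PowerSeries.C (PowerSeries.constantCoeff (r i)) - r i) := by
      rw [PowerSeries.X_dvd_iff]; simp
    obtain ⟨e, he⟩ := hdvd
    rw [he, mul_smul]
    exact Submodule.smul_mem_pointwise_smul _ _ _ trivial
  have hσinj : Function.Injective σ := by
    rw [injective_iff_map_eq_zero]
    intro c hc
    have hmem : (∑ i, c i • b i) ∈ ((PowerSeries.X : PowerSeries k) • (⊤ : Submodule (PowerSeries k) ↥L)) := (Submodule.Quotient.mk_eq_zero _).mp hc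
    obtain ⟨q, hq⟩ := (memNq _).mp hmem
    funext i
    have h1 := congrArg (fun z => b.repr z i) hq
    simp only [map_smul, map_sum, Finsupp.smul_apply, smul_eq_mul, Finsupp.coe_smul] at h1
    have h2 : ∀ j, b.repr (c j • b j) i
        = if j = i then PowerSeries.C (c j) else 0 := by
      intro j
      rw [hsmul, map_smul, b.repr_self, ← PowerSeries.C_eq_algebraMap]
      simp [Finsupp.smul_single, Finsupp.single_apply]
    rw [Finset.sum_apply', Finset.sum_congr rfl (fun j _ => h2 j),
      Finset.sum_ite_eq' Finset.univ i (fun j => PowerSeries.C (c j))] at h1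
    simp only [Finset.mem_univ, if_true] at h1
    have h3 := congrArg PowerSeries.constantCoeff h1
    simpa using h3.symm
  have hqrank : Module.finrank k
      (↥L ⧸ ((PowerSeries.X : PowerSeries k) • (⊤ : Submodule (PowerSeries k) ↥L))) = 2 := by
    have e := LinearEquiv.ofBijective σ ⟨hσinj, hσsurj⟩
    rw [← LinearEquiv.finrank_eq e, Module.finrank_fintype_fun_eq_card]
    exact hcard

  have hsq : ∀ p : ↥L, g (g p) = (γ₁ + γ₂) • (g p) - (γ₁ * γ₂) • p := by
    intro p
    apply Subtype.ext
    apply Prod.ext <;>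
      · simp only [AddSubgroupClass.coe_sub, SetLike.val_smul, hg, Prod.smul_fst,
          Prod.smul_snd, Prod.fst_sub, Prod.snd_sub]
        simp only [Algebra.smul_def, map_add, map_mul]
        ring
  have hnil : IsNilpotent gbar := by
    refine ⟨2, ?_⟩
    apply LinearMap.ext
    intro q
    obtain ⟨p, rfl⟩ := Submodule.Quotient.mk_surjective _ q
    rw [pow_two, Module.End.mul_apply, hgbar, hgbar, LinearMap.zero_apply,
      Submodule.Quotient.mk_eq_zero, hsq]
    obtain ⟨c₁, hc₁⟩ : (PowerSeries.X : PowerSeries k) ∣ (γ₁ + γ₂) := dvd_add h₁ h₂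
    obtain ⟨c₂, hc₂⟩ : (PowerSeries.X : PowerSeries k) ∣ (γ₁ * γ₂) := h₁.mul_right γ₂
    refine Submodule.sub_mem _ ?_ ?_
    · rw [hc₁, mul_smul]
      exact Submodule.smul_mem_pointwise_smul _ _ _ trivial
    · rw [hc₂, mul_smul]
      exact Submodule.smul_mem_pointwise_smul _ _ _ trivial

  have hiff : (gbar ≠ 0 ↔
      (algebraMap (PowerSeries k) F (γ₁ - γ₂)) • {x : F | ∃ y : F, (x, y) ∈ L}
        = {x : F | (x, (0 : F)) ∈ L}) := by
    have hφ : Function.Injective (algebraMap (PowerSeries k) F) :=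
      IsFractionRing.injective _ _
    have hδ : γ₁ - γ₂ ≠ 0 := sub_ne_zero.mpr hne
    have hδF : algebraMap (PowerSeries k) F (γ₁ - γ₂) ≠ 0 := by
      intro h; exact hδ (hφ (by rw [h, map_zero]))
    have hXF : algebraMap (PowerSeries k) F (PowerSeries.X) ≠ 0 := by
      intro h; exact PowerSeries.X_ne_zero (hφ (by rw [h, map_zero]))
    obtain ⟨d₂, hd₂⟩ := h₂
    have E0 : ∀ p ∈ L, ((algebraMap (PowerSeries k) F (γ₁ - γ₂)) * p.1, (0:F)) ∈ L := by
      intro p hp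
      have h3 := L.sub_mem (hstab p hp) (L.smul_mem γ₂ hp)
      have he : (algebraMap (PowerSeries k) F γ₁ * p.1, algebraMap (PowerSeries k) F γ₂ * p.2)
          - γ₂ • p = ((algebraMap (PowerSeries k) F (γ₁ - γ₂)) * p.1, (0:F)) := by
        apply Prod.ext
        · simp only [Prod.fst_sub, Prod.smul_fst]
          simp only [Algebra.smul_def, map_sub]; ring
        · simp only [Prod.snd_sub, Prod.smul_snd]
          simp only [Algebra.smul_def]; ring
      rwa [he] at h3
    set S : Submodule (PowerSeries k) (F × F) :=
      (PowerSeries.X : PowerSeries k) • L with hS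
    have memS : ∀ v : F × F, v ∈ S ↔
        ∃ w ∈ L, (PowerSeries.X : PowerSeries k) • w = v := by
      intro v; constructor
      · rintro ⟨w, hw, rfl⟩; exact ⟨w, hw, rfl⟩
      · rintro ⟨w, hw, rfl⟩; exact Submodule.smul_mem_pointwise_smul _ _ _ hw
    have memN : ∀ p : ↥L,
        p ∈ ((PowerSeries.X : PowerSeries k) • (⊤ : Submodule (PowerSeries k) ↥L)) ↔ ((p : F × F)) ∈ S := by
      intro p; constructor
      · rintro ⟨q, -, rfl⟩
        exact (memS _).mpr ⟨(q : F × F), q.2, rfl⟩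
      · intro hv
        obtain ⟨w, hw, hwe⟩ := (memS _).mp hv
        exact ⟨⟨w, hw⟩, trivial, Subtype.ext hwe⟩
    have hgdec : ∀ p : ↥L, ((g p : F × F)) =
        ((algebraMap (PowerSeries k) F (γ₁ - γ₂)) * (p : F × F).1, (0:F))
          + γ₂ • (p : F × F) := by
      intro p
      rw [hg]
      apply Prod.ext
      · simp only [Prod.fst_add, Prod.smul_fst]
        simp only [Algebra.smul_def, map_sub]; ring
      · simp only [Prod.snd_add, Prod.smul_snd]
        simp only [Algebra.smul_def]; ring
    have hγ₂S : ∀ p : ↥L, γ₂ • ((p : F × F)) ∈ S := by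
      intro p
      rw [hd₂, mul_smul]
      exact Submodule.smul_mem_pointwise_smul _ _ _ (L.smul_mem d₂ p.2)
    have C1 : gbar = 0 ↔ ∀ p : ↥L,
        (((algebraMap (PowerSeries k) F (γ₁ - γ₂)) * (p : F × F).1, (0:F)) : F × F) ∈ S := by
      constructor
      · intro h0 p
        have hz : Submodule.Quotient.mk (g p)
            = (0 : ↥L ⧸ ((PowerSeries.X : PowerSeries k) • (⊤ : Submodule (PowerSeries k) ↥L))) := by
          rw [← hgbar p, h0]; rfl
        have hgS := (memN _).mp ((Submodule.Quotient.mk_eq_zero _).mp hz)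
        have hsub := S.sub_mem hgS (hγ₂S p)
        rwa [hgdec p, add_sub_cancel_right] at hsub
      · intro hall
        apply LinearMap.ext
        intro q
        obtain ⟨p, rfl⟩ := Submodule.Quotient.mk_surjective _ q
        rw [hgbar, LinearMap.zero_apply, Submodule.Quotient.mk_eq_zero, memN, hgdec p]
        exact S.add_mem (hall p) (hγ₂S p)
    constructor
    · -- gbar ≠ 0 → equality
      intro hne0
      have hnall : ¬ ∀ p : ↥L,
          (((algebraMap (PowerSeries k) F (γ₁ - γ₂)) * (p : F × F).1, (0:F)) : F × F) ∈ S :=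
        fun h => hne0 (C1.mpr h)
      push_neg at hnall
      obtain ⟨p, hpS⟩ := hnall
      have hp1 : ((p : F × F)).1 ≠ 0 := by
        intro h
        exact hpS (by rw [h, mul_zero]; exact S.zero_mem)
      ext b
      simp only [Set.mem_smul_set, Set.mem_setOf_eq]
      constructor
      · rintro ⟨x, ⟨y, hxy⟩, rfl⟩
        rw [smul_eq_mul]
        exact E0 (x, y) hxy
      · intro hb
        by_cases hb0 : b = 0
        · exact ⟨0, ⟨0, L.zero_mem⟩, by rw [hb0, smul_zero]⟩
        · set d := (algebraMap (PowerSeries k) F (γ₁ - γ₂)) * ((p : F × F)).1 with hd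
          have hdne : d ≠ 0 := mul_ne_zero hδF hp1
          rcases ValuationRing.isInteger_or_isInteger (PowerSeries k) (b / d) with
            ⟨s, hs⟩ | ⟨s, hs⟩
          · -- φ s = b / d
            have hbs : b = algebraMap (PowerSeries k) F s * d := by
              rw [hs, div_mul_cancel₀ _ hdne]
            refine ⟨algebraMap (PowerSeries k) F s * (p : F × F).1,
              ⟨algebraMap (PowerSeries k) F s * (p : F × F).2, ?_⟩, ?_⟩
            · have hm := L.smul_mem s p.2
              have : s • ((p : F × F)) = (algebraMap (PowerSeries k) F s * (p : F × F).1,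
                  algebraMap (PowerSeries k) F s * (p : F × F).2) := by
                apply Prod.ext
                · simp [Algebra.smul_def]
                · simp [Algebra.smul_def]
              rwa [this] at hm
            · rw [smul_eq_mul, hbs, hd]; ring
          · -- φ s = (b/d)⁻¹ = d / b
            have hds : d = algebraMap (PowerSeries k) F s * b := by
              rw [hs, inv_div, div_mul_cancel₀ _ hb0]
            by_cases hu : IsUnit s
            · obtain ⟨u, rfl⟩ := hu
              have hinv : algebraMap (PowerSeries k) F ↑u * algebraMap (PowerSeries k) F ↑(u⁻¹) = 1 := by
                rw [← map_mul, Units.mul_inv, map_one]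
              refine ⟨algebraMap (PowerSeries k) F ↑(u⁻¹) * (p : F × F).1,
                ⟨algebraMap (PowerSeries k) F ↑(u⁻¹) * (p : F × F).2, ?_⟩, ?_⟩
              · have hm := L.smul_mem (↑(u⁻¹) : PowerSeries k) p.2
                have : (↑(u⁻¹) : PowerSeries k) • ((p : F × F)) =
                    (algebraMap (PowerSeries k) F ↑(u⁻¹) * (p : F × F).1,
                     algebraMap (PowerSeries k) F ↑(u⁻¹) * (p : F × F).2) := by
                  apply Prod.ext <;> simp [Algebra.smul_def]
                rwa [this] at hm
              · rw [smul_eq_mul]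
                have : algebraMap (PowerSeries k) F ↑(u⁻¹) * d = b := by
                  rw [hds, ← mul_assoc, mul_comm (algebraMap (PowerSeries k) F ↑(u⁻¹)), hinv,
                    one_mul]
                rw [← this, hd]; ring
            · exfalso
              have hXs : (PowerSeries.X : PowerSeries k) ∣ s := by
                rw [PowerSeries.X_dvd_iff]
                by_contra hc
                exact hu (PowerSeries.isUnit_iff_constantCoeff.mpr (isUnit_iff_ne_zero.mpr hc))
              obtain ⟨s', rfl⟩ := hXs
              apply hpS
              refine (memS _).mpr ⟨(algebraMap (PowerSeries k) F s' * b, 0), ?_, ?_⟩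
              · have hm := L.smul_mem s' hb
                have : s' • ((b, (0:F)) : F × F) = (algebraMap (PowerSeries k) F s' * b, 0) := by
                  apply Prod.ext <;> simp [Algebra.smul_def]
                rwa [this] at hm
              · apply Prod.ext
                · simp only [Prod.smul_fst]
                  rw [Algebra.smul_def, hds, map_mul]; ring
                · simp [Prod.smul_snd]
    · -- equality → gbar ≠ 0
      intro heq h0
      have hall := C1.mp h0
      set Isub : Submodule (PowerSeries k) F :=
        Submodule.comap ((LinearMap.inl F F F).restrictScalars (PowerSeries k)) L with hIsub
      have memI : ∀ x : F, x ∈ Isub ↔ (x, (0:F)) ∈ L := fun x => Iff.rfl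
      have hex : ∃ v ∈ L, (v : F × F).1 ≠ 0 := by
        by_contra hc
        push_neg at hc
        have hsub : (L : Set (F × F)) ⊆
            ((LinearMap.ker (LinearMap.fst F F F) : Submodule F (F × F)) : Set (F × F)) := by
          intro v hv
          simpa [LinearMap.mem_ker] using hc v hv
        have h1 := Submodule.span_le.mpr hsub
        rw [hfull] at h1
        have h2 := h1 (Submodule.mem_top (x := ((1:F), (0:F))))
        simp [LinearMap.mem_ker] at h2
      obtain ⟨v, hv, hv1⟩ := hex
      have hbmem : (algebraMap (PowerSeries k) F (γ₁ - γ₂)) * v.1 ∈ Isub := E0 v hv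
      have hbne : (algebraMap (PowerSeries k) F (γ₁ - γ₂)) * v.1 ≠ 0 := mul_ne_zero hδF hv1
      have hFG : Isub.FG := by
        haveI : IsNoetherian (PowerSeries k) ↥L := isNoetherian_of_fg_of_noetherian L hfg
        set K : Submodule (PowerSeries k) (F × F) :=
          L ⊓ LinearMap.ker ((LinearMap.snd F F F).restrictScalars (PowerSeries k)) with hK
        have hKle : K ≤ L := inf_le_left
        have hKfg : K.FG := by
          have hfg1 : (Submodule.comap L.subtype K).FG := IsNoetherian.noetherian _
          have hfg2 := hfg1.map L.subtype
          rwa [Submodule.map_comap_subtype, inf_eq_right.mpr hKle] at hfg2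
        have hIK : Isub = Submodule.map
            ((LinearMap.fst F F F).restrictScalars (PowerSeries k)) K := by
          ext x
          constructor
          · intro hx
            exact ⟨(x, 0), ⟨hx, by simp [LinearMap.mem_ker]⟩, rfl⟩
          · rintro ⟨w, ⟨hwL, hw2⟩, rfl⟩
            have : w.2 = 0 := by simpa [LinearMap.mem_ker] using hw2
            have hww : w = (w.1, (0:F)) := by
              apply Prod.ext
              · rfl
              · exact this
            rw [memI]
            show ((w.1 : F), (0:F)) ∈ L
            rwa [← hww]
        rw [hIK]
        exact hKfg.map _
      have hle : Isub ≤ (Ideal.span {(PowerSeries.X : PowerSeries k)}) • Isub := by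
        rw [Submodule.ideal_span_singleton_smul]
        intro b hb
        have hbJ : b ∈ (algebraMap (PowerSeries k) F (γ₁ - γ₂)) • {x : F | ∃ y, (x,y) ∈ L} := by
          rw [heq]; exact hb
        obtain ⟨x, ⟨y, hxy⟩, rfl⟩ := hbJ
        have hS' := hall ⟨(x, y), hxy⟩
        obtain ⟨w, hw, hwe⟩ := (memS _).mp hS'
        have hw2 : w.2 = 0 := by
          have h2 := congrArg Prod.snd hwe
          simp only [Prod.smul_snd, Algebra.smul_def] at h2
          exact (mul_eq_zero.mp h2).resolve_left hXF
        have hw1I : w.1 ∈ Isub := by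
          rw [memI]
          have hww : w = (w.1, (0:F)) := by
            apply Prod.ext
            · rfl
            · exact hw2
          rwa [← hww]
        have hXw : (PowerSeries.X : PowerSeries k) • w.1
            = (algebraMap (PowerSeries k) F (γ₁ - γ₂)) • x := by
          have h1 := congrArg Prod.fst hwe
          simp only [Prod.smul_fst] at h1
          rw [h1]
          rw [smul_eq_mul]
        show (algebraMap (PowerSeries k) F (γ₁ - γ₂)) • x ∈
          (PowerSeries.X : PowerSeries k) • Isub
        rw [← hXw]
        exact Submodule.smul_mem_pointwise_smul _ _ _ hw1I
      have hjac : Ideal.span {(PowerSeries.X : PowerSeries k)} ≤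
          (⊥ : Ideal (PowerSeries k)).jacobson := by
        rw [IsLocalRing.jacobson_eq_maximalIdeal ⊥ bot_ne_top]
        rw [Ideal.span_le, Set.singleton_subset_iff]
        rw [SetLike.mem_coe, IsLocalRing.mem_maximalIdeal]
        intro hXu
        have := PowerSeries.isUnit_iff_constantCoeff.mp hXu
        simp at this
      have hbot := Submodule.eq_bot_of_le_smul_of_le_jacobson_bot _ Isub hFG hle hjac
      rw [hbot] at hbmem
      exact hbne (by simpa using hbmem)

  exact ⟨hfree, hrank, hqrank, hnil, hiff⟩
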